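/- Fix an integer g ≥ 1 and a symmetric g×g complex matrix τ whose imaginary part is positive definite. Let m ≥ 0, let a_1, …, a_{m+2} ∈ ℂ^g, let ζ ∈ ℂ^g, and let α_1, …, α_{m+2} ∈ ℂ. If ∑_{i=1}^{m+2} α_i Θ_a(ζ + a_i) = 0 for every a ∈ {0,1}^g (i.e., the points K(ζ + a_i) of the Kummer map satisfy the linear relation with coefficients α_i), then for every z ∈ ℂ^g one has ∑_{i=1}^{m+2} α_i θ(z + 2ζ + a_i)·θ(z − a_i) = 0. -/

import Mathlib

open Finset Complex

/-- The summand of the Riemann theta series: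
`exp(πi·nᵀτn + 2πi·nᵀz)` for `n ∈ ℤ^g`. -/
noncomputable def riemannThetaTerm {g : ℕ} (τ : Matrix (Fin g) (Fin g) ℂ)
    (z : Fin g → ℂ) (n : Fin g → ℤ) : ℂ :=
  Complex.exp ((Real.pi : ℂ) * Complex.I *
      (∑ i : Fin g, ∑ j : Fin g, (n i : ℂ) * τ i j * (n j : ℂ)) +
    2 * (Real.pi : ℂ) * Complex.I * ∑ i : Fin g, (n i : ℂ) * z i)

/-- The Riemann theta function `θ(z) = ∑_{n ∈ ℤ^g} exp(πi·nᵀτn + 2πi·nᵀz)`. -/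
noncomputable def riemannTheta {g : ℕ} (τ : Matrix (Fin g) (Fin g) ℂ)
    (z : Fin g → ℂ) : ℂ :=
  ∑' n : Fin g → ℤ, riemannThetaTerm τ z n

/-- The second-order theta function with characteristic `a ∈ {0,1}^g`:
`Θ_a(z) = ∑_{n ∈ ℤ^g} exp(2πi·(n+a/2)ᵀτ(n+a/2) + 4πi·(n+a/2)ᵀz)`. -/
noncomputable def theta2 {g : ℕ} (τ : Matrix (Fin g) (Fin g) ℂ)
    (a : Fin g → Fin 2) (z : Fin g → ℂ) : ℂ :=
  ∑' n : Fin g → ℤ,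
    Complex.exp (2 * (Real.pi : ℂ) * Complex.I *
        (∑ i : Fin g, ∑ j : Fin g,
          ((n i : ℂ) + ((a i : ℕ) : ℂ) / 2) * τ i j * ((n j : ℂ) + ((a j : ℕ) : ℂ) / 2)) +
      4 * (Real.pi : ℂ) * Complex.I *
        ∑ i : Fin g, ((n i : ℂ) + ((a i : ℕ) : ℂ) / 2) * z i)

noncomputable def t2term {g : ℕ} (τ : Matrix (Fin g) (Fin g) ℂ)
    (b : Fin g → Fin 2) (z : Fin g → ℂ) (n : Fin g → ℤ) : ℂ :=
  Complex.exp (2 * (Real.pi : ℂ) * Complex.I *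
      (∑ i : Fin g, ∑ j : Fin g,
        ((n i : ℂ) + ((b i : ℕ) : ℂ) / 2) * τ i j * ((n j : ℂ) + ((b j : ℕ) : ℂ) / 2)) +
    4 * (Real.pi : ℂ) * Complex.I *
      ∑ i : Fin g, ((n i : ℂ) + ((b i : ℕ) : ℂ) / 2) * z i)

lemma theta2_eq_tsum {g : ℕ} (τ : Matrix (Fin g) (Fin g) ℂ) (b : Fin g → Fin 2)
    (z : Fin g → ℂ) : theta2 τ b z = ∑' n, t2term τ b z n := rfl


section
variable {g : ℕ} (τ : Matrix (Fin g) (Fin g) ℂ)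

lemma im_quad (v : Fin g → ℝ) :
    (∑ i, ∑ j, ((v i : ℝ) : ℂ) * τ i j * ((v j : ℝ) : ℂ)).im
      = ∑ i, ∑ j, v i * (τ i j).im * v j := by
  rw [im_sum]
  refine Finset.sum_congr rfl fun i _ => ?_
  rw [im_sum]
  refine Finset.sum_congr rfl fun j _ => ?_
  simp [Complex.mul_im, Complex.mul_re]

lemma im_lin (z : Fin g → ℂ) (v : Fin g → ℝ) :
    (∑ i, ((v i : ℝ) : ℂ) * z i).im = ∑ i, v i * (z i).im := by
  rw [im_sum]
  exact Finset.sum_congr rfl fun i _ => by simp [Complex.mul_im]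

lemma norm_exp_theta (k l : ℝ) (z : Fin g → ℂ) (v : Fin g → ℝ) :
    ‖Complex.exp ((k : ℂ) * Complex.I *
        (∑ i, ∑ j, ((v i : ℝ) : ℂ) * τ i j * ((v j : ℝ) : ℂ)) +
      (l : ℂ) * Complex.I * ∑ i, ((v i : ℝ) : ℂ) * z i)‖
    = Real.exp (-(k * ∑ i, ∑ j, v i * (τ i j).im * v j)
        - l * ∑ i, v i * (z i).im) := by
  rw [Complex.norm_exp]
  congr 1
  simp [Complex.add_re, Complex.mul_re, Complex.mul_im, im_quad, im_lin]
  ring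

end

section
variable {g : ℕ} (τ : Matrix (Fin g) (Fin g) ℂ)

lemma norm_riemannThetaTerm (z : Fin g → ℂ) (n : Fin g → ℤ) :
    ‖riemannThetaTerm τ z n‖
      = Real.exp (-(Real.pi * ∑ i, ∑ j, (n i : ℝ) * (τ i j).im * (n j : ℝ))
          - (2 * Real.pi) * ∑ i, (n i : ℝ) * (z i).im) := by
  have h := norm_exp_theta τ Real.pi (2 * Real.pi) z (fun i => (n i : ℝ))
  rw [riemannThetaTerm]
  have harg : (Real.pi : ℂ) * Complex.I * (∑ i, ∑ j, (n i : ℂ) * τ i j * (n j : ℂ))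
        + 2 * (Real.pi : ℂ) * Complex.I * ∑ i, (n i : ℂ) * z i
      = ((Real.pi : ℝ) : ℂ) * Complex.I
          * (∑ i, ∑ j, (((n i : ℝ) : ℂ)) * τ i j * (((n j : ℝ) : ℂ)))
        + (((2 * Real.pi : ℝ)) : ℂ) * Complex.I * ∑ i, (((n i : ℝ) : ℂ)) * z i := by
    push_cast
    ring
  rw [harg]
  exact h

lemma norm_t2term (b : Fin g → Fin 2) (z : Fin g → ℂ) (n : Fin g → ℤ) :
    ‖t2term τ b z n‖
      = Real.exp (-(2 * Real.pi * ∑ i, ∑ j,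
            ((n i : ℝ) + ((b i : ℕ) : ℝ) / 2) * (τ i j).im * ((n j : ℝ) + ((b j : ℕ) : ℝ) / 2))
          - (4 * Real.pi) * ∑ i, ((n i : ℝ) + ((b i : ℕ) : ℝ) / 2) * (z i).im) := by
  have h := norm_exp_theta τ (2 * Real.pi) (4 * Real.pi) z
    (fun i => (n i : ℝ) + ((b i : ℕ) : ℝ) / 2)
  rw [t2term]
  have harg : 2 * (Real.pi : ℂ) * Complex.I * (∑ i, ∑ j,
          ((n i : ℂ) + ((b i : ℕ) : ℂ) / 2) * τ i j * ((n j : ℂ) + ((b j : ℕ) : ℂ) / 2))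
        + 4 * (Real.pi : ℂ) * Complex.I * ∑ i, ((n i : ℂ) + ((b i : ℕ) : ℂ) / 2) * z i
      = (((2 * Real.pi : ℝ)) : ℂ) * Complex.I * (∑ i, ∑ j,
            ((((n i : ℝ) + ((b i : ℕ) : ℝ) / 2 : ℝ)) : ℂ) * τ i j
              * ((((n j : ℝ) + ((b j : ℕ) : ℝ) / 2 : ℝ)) : ℂ))
        + (((4 * Real.pi : ℝ)) : ℂ) * Complex.I
            * ∑ i, ((((n i : ℝ) + ((b i : ℕ) : ℝ) / 2 : ℝ)) : ℂ) * z i := by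
    push_cast
    ring
  rw [harg]
  exact h

end

lemma summable_exp_int (c C : ℝ) (hc : 0 < c) :
    Summable fun n : ℤ => Real.exp (-c * (n : ℝ)^2 + C * |(n : ℝ)|) := by
  set D := (C + 1)^2 / (4 * c) with hD
  have hgeo : Summable fun k : ℕ => Real.exp (-1) ^ k :=
    summable_geometric_of_lt_one (Real.exp_pos _).le (Real.exp_lt_one_iff.mpr (by norm_num))
  have h1 : Summable fun n : ℤ => Real.exp (-1) ^ n.natAbs := by
    apply Summable.of_nat_of_neg <;> simp [hgeo]
  refine Summable.of_nonneg_of_le (fun n => (Real.exp_pos _).le) (fun n => ?_)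
    (h1.mul_left (Real.exp D))
  have habs : |(n : ℝ)| = (n.natAbs : ℝ) := by
    rw [← Int.cast_abs, Int.abs_eq_natAbs, Int.cast_natCast]
  rw [← Real.exp_nat_mul, ← Real.exp_add]
  apply Real.exp_le_exp.mpr
  have hx : (0:ℝ) ≤ |(n:ℝ)| := abs_nonneg _
  have hDc : D * (4 * c) = (C+1)^2 := by rw [hD, div_mul_cancel₀]; positivity
  have hnat : (n.natAbs : ℝ) * (-1) = -|(n:ℝ)| := by rw [habs]; ring
  have hsq : ((n:ℝ))^2 = |(n:ℝ)|^2 := (_root_.sq_abs _).symm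
  rw [hnat, hsq]
  nlinarith [sq_nonneg (2 * c * |(n:ℝ)| - (C+1)), hc, hx]

lemma summable_exp_pi (g : ℕ) (c C : ℝ) (hc : 0 < c) :
    Summable fun n : Fin g → ℤ =>
      Real.exp (∑ i, (-c * (n i : ℝ)^2 + C * |(n i : ℝ)|)) := by
  induction g with
  | zero => simp; exact summable_of_finite_support (Set.toFinite _)
  | succ g ih =>
      apply ((Fin.consEquiv (fun _ : Fin (g+1) => ℤ)).summable_iff).mp
      have key : ∀ p : ℤ × (Fin g → ℤ),
          Real.exp (-c * (p.1 : ℝ)^2 + C * |(p.1 : ℝ)|)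
            * Real.exp (∑ i, (-c * (p.2 i : ℝ)^2 + C * |(p.2 i : ℝ)|))
          = Real.exp (∑ i : Fin (g+1),
              (-c * ((Fin.consEquiv (fun _ => ℤ)) p i : ℝ)^2
                + C * |((Fin.consEquiv (fun _ => ℤ)) p i : ℝ)|)) := by
        intro p
        rw [← Real.exp_add, Fin.sum_univ_succ]
        simp [Fin.consEquiv]
      exact (Summable.mul_of_nonneg (summable_exp_int c C hc) ih
        (fun _ => (Real.exp_pos _).le) (fun _ => (Real.exp_pos _).le)).congr
        (fun p => key p)

lemma posdef_quadratic_lb {g : ℕ} (hg : 1 ≤ g) {Y : Matrix (Fin g) (Fin g) ℝ}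
    (hY : Y.PosDef) :
    ∃ c > 0, ∀ v : Fin g → ℝ, c * (∑ i, v i ^ 2) ≤ ∑ i, ∑ j, v i * Y i j * v j := by
  classical
  set Q : (Fin g → ℝ) → ℝ := fun v => ∑ i, ∑ j, v i * Y i j * v j with hQdef
  have hQpos : ∀ v : Fin g → ℝ, v ≠ 0 → 0 < Q v := by
    intro v hv
    have := hY.dotProduct_mulVec_pos hv
    rw [star_trivial] at this
    calc (0:ℝ) < dotProduct v (Y.mulVec v) := this
    _ = Q v := by
      simp only [dotProduct, Matrix.mulVec, Finset.mul_sum, hQdef]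
      exact Finset.sum_congr rfl fun i _ => Finset.sum_congr rfl fun j _ => by ring
  have hQhom : ∀ (s : ℝ) (v : Fin g → ℝ), Q (fun i => s * v i) = s^2 * Q v := by
    intro s v
    simp only [hQdef, Finset.mul_sum]
    exact Finset.sum_congr rfl fun i _ => Finset.sum_congr rfl fun j _ => by ring
  have hQc : Continuous Q := by
    apply continuous_finset_sum
    intro i _
    apply continuous_finset_sum
    intro j _
    exact ((continuous_apply i).mul continuous_const).mul (continuous_apply j)
  set E := EuclideanSpace ℝ (Fin g)
  have hfc : Continuous (fun x : E => Q x) :=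
    hQc.comp (PiLp.continuous_ofLp (p := 2) (β := fun _ : Fin g => ℝ))
  have hne : (Metric.sphere (0:E) 1).Nonempty := by
    refine ⟨EuclideanSpace.single ⟨0, hg⟩ (1:ℝ), ?_⟩
    rw [mem_sphere_zero_iff_norm, EuclideanSpace.norm_single]; norm_num
  obtain ⟨w, hw, hmin⟩ :=
    (isCompact_sphere (0:E) 1).exists_isMinOn hne hfc.continuousOn
  rw [mem_sphere_zero_iff_norm] at hw
  have hwne : (w : Fin g → ℝ) ≠ 0 := by
    intro h0
    have : ‖w‖ = 0 := by
      have : w = 0 := by ext j; simpa using congrFun h0 j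
      simp [this]
    rw [hw] at this; norm_num at this
  refine ⟨Q w, hQpos w hwne, fun v => ?_⟩
  by_cases hv : v = 0
  · simp [hv, hQdef]
  · set r : ℝ := Real.sqrt (∑ i, v i ^ 2) with hr
    have hsum_pos : 0 < ∑ i, v i ^ 2 := by
      have hnz : ∃ i, v i ≠ 0 := by
        by_contra hcon
        push_neg at hcon
        exact hv (funext hcon)
      obtain ⟨i, hi⟩ := hnz
      have : 0 < v i ^ 2 := by positivity
      exact Finset.sum_pos' (fun j _ => sq_nonneg _) ⟨i, Finset.mem_univ i, this⟩
    have hrpos : 0 < r := Real.sqrt_pos.mpr hsum_pos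
    have hr2 : r ^ 2 = ∑ i, v i ^ 2 := Real.sq_sqrt hsum_pos.le
    set w' : E := WithLp.toLp 2 (fun i => r⁻¹ * v i) with hw'
    have hw'norm : ‖w'‖ = 1 := by
      rw [EuclideanSpace.norm_eq]
      have : ∑ i, ‖w' i‖ ^ 2 = r⁻¹^2 * ∑ i, v i ^ 2 := by
        simp only [hw', PiLp.toLp_apply, Finset.mul_sum, Real.norm_eq_abs, _root_.sq_abs]
        exact Finset.sum_congr rfl fun i _ => by ring
      rw [this, ← hr2]
      rw [show r⁻¹ ^ 2 * r ^ 2 = (r⁻¹ * r)^2 by ring, inv_mul_cancel₀ hrpos.ne']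
      simp
    have hmem : w' ∈ Metric.sphere (0:E) 1 := by
      rwa [mem_sphere_zero_iff_norm]
    have hle : Q w ≤ Q w' := hmin hmem
    have hQw' : Q w' = r⁻¹^2 * Q v := hQhom r⁻¹ v
    rw [hQw'] at hle
    have h2 : Q w * r^2 ≤ Q v := by
      have h3 := mul_le_mul_of_nonneg_right hle (sq_nonneg r)
      rw [show r⁻¹ ^ 2 * Q v * r ^ 2 = (r⁻¹ * r) ^ 2 * Q v by ring,
        inv_mul_cancel₀ hrpos.ne'] at h3
      simpa using h3
    calc Q w * (∑ i, v i ^ 2) = Q w * r^2 := by rw [hr2]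
    _ ≤ Q v := h2

section
variable {g : ℕ} (τ : Matrix (Fin g) (Fin g) ℂ)

lemma summable_norm_rt (hg : 1 ≤ g)
    (hτ' : (Matrix.of fun i j => (τ i j).im).PosDef) (z : Fin g → ℂ) :
    Summable fun n : Fin g → ℤ => ‖riemannThetaTerm τ z n‖ := by
  obtain ⟨c, hc, hquad⟩ := posdef_quadratic_lb hg hτ'
  set M := ∑ j, |(z j).im| with hM
  have hM0 : 0 ≤ M := Finset.sum_nonneg fun j _ => abs_nonneg _
  have hπ := Real.pi_pos
  refine Summable.of_nonneg_of_le (fun n => norm_nonneg _) (fun n => ?_)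
    (summable_exp_pi g (Real.pi * c) (2 * Real.pi * M) (by positivity))
  rw [norm_riemannThetaTerm]
  apply Real.exp_le_exp.mpr
  have hquad' : c * ∑ i, ((n i : ℝ))^2 ≤ ∑ i, ∑ j, (n i : ℝ) * (τ i j).im * (n j : ℝ) := by
    simpa [Matrix.of_apply] using hquad (fun i => (n i : ℝ))
  have habs : |∑ i, (n i : ℝ) * (z i).im| ≤ M * ∑ i, |(n i : ℝ)| := by
    calc |∑ i, (n i : ℝ) * (z i).im| ≤ ∑ i, |(n i : ℝ) * (z i).im| :=
          Finset.abs_sum_le_sum_abs _ _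
    _ ≤ ∑ i, |(n i : ℝ)| * M := by
        refine Finset.sum_le_sum fun i _ => ?_
        rw [abs_mul]
        exact mul_le_mul_of_nonneg_left (Finset.single_le_sum
          (f := fun j => |(z j).im|) (fun j _ => abs_nonneg _) (Finset.mem_univ i))
          (abs_nonneg _)
    _ = M * ∑ i, |(n i : ℝ)| := by rw [← Finset.sum_mul, mul_comm]
  have hRHS : ∑ i, (-(Real.pi * c) * ((n i : ℝ))^2 + (2 * Real.pi * M) * |(n i : ℝ)|)
      = -(Real.pi * c) * ∑ i, ((n i : ℝ))^2 + (2 * Real.pi * M) * ∑ i, |(n i : ℝ)| := by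
    rw [Finset.sum_add_distrib, ← Finset.mul_sum, ← Finset.mul_sum]
  rw [hRHS]
  have h1 := mul_le_mul_of_nonneg_left hquad' hπ.le
  have h2 : -(∑ i, (n i : ℝ) * (z i).im) ≤ M * ∑ i, |(n i : ℝ)| :=
    (neg_le_abs _).trans habs
  have h3 := mul_le_mul_of_nonneg_left h2 (by positivity : (0:ℝ) ≤ 2 * Real.pi)
  nlinarith [h1, h3]

lemma summable_norm_t2 (hg : 1 ≤ g)
    (hτ' : (Matrix.of fun i j => (τ i j).im).PosDef) (b : Fin g → Fin 2) (z : Fin g → ℂ) :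
    Summable fun n : Fin g → ℤ => ‖t2term τ b z n‖ := by
  obtain ⟨c, hc, hquad⟩ := posdef_quadratic_lb hg hτ'
  set M := ∑ j, |(z j).im| with hM
  have hM0 : 0 ≤ M := Finset.sum_nonneg fun j _ => abs_nonneg _
  have hπ := Real.pi_pos
  set D : ℝ := Real.pi * c * g / 2 + 4 * Real.pi * M * g with hD
  refine Summable.of_nonneg_of_le (fun n => norm_nonneg _) (fun n => ?_)
    (((summable_exp_pi g (Real.pi * c) (4 * Real.pi * M) (by positivity)).mul_left
      (Real.exp D)))
  rw [norm_t2term]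
  rw [← Real.exp_add]
  apply Real.exp_le_exp.mpr
  set w : Fin g → ℝ := fun i => (n i : ℝ) + ((b i : ℕ) : ℝ) / 2 with hw
  have hβ : ∀ i, 0 ≤ ((b i : ℕ) : ℝ) / 2 ∧ ((b i : ℕ) : ℝ) / 2 ≤ 1/2 := by
    intro i
    have h1 : (b i : ℕ) ≤ 1 := Nat.lt_succ_iff.mp (b i).is_lt
    have h2 : ((b i : ℕ) : ℝ) ≤ 1 := by exact_mod_cast h1
    have h3 : (0:ℝ) ≤ ((b i : ℕ) : ℝ) := Nat.cast_nonneg _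
    constructor <;> linarith
  have hquad' : c * ∑ i, (w i)^2 ≤ ∑ i, ∑ j, w i * (τ i j).im * w j := by
    simpa [Matrix.of_apply] using hquad w
  have hsq : ∑ i, (((n i : ℝ))^2 / 2 - 1/4) ≤ ∑ i, (w i)^2 := by
    refine Finset.sum_le_sum fun i _ => ?_
    obtain ⟨h0, h1⟩ := hβ i
    have := sq_nonneg ((n i : ℝ) + 2 * (((b i : ℕ) : ℝ) / 2))
    simp only [hw]
    nlinarith [mul_nonneg h0 h0]
  have hsq' : ∑ i, ((n i : ℝ))^2 / 2 - (g : ℝ)/4 ≤ ∑ i, (w i)^2 := by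
    have : ∑ i, (((n i : ℝ))^2 / 2 - 1/4)
        = ∑ i, ((n i : ℝ))^2 / 2 - (g : ℝ)/4 := by
      rw [Finset.sum_sub_distrib]
      simp [Finset.card_univ]
      ring
    linarith [hsq, this.symm.le]
  have habs : |∑ i, w i * (z i).im| ≤ M * ∑ i, |(n i : ℝ)| + M * g := by
    calc |∑ i, w i * (z i).im| ≤ ∑ i, |w i * (z i).im| := Finset.abs_sum_le_sum_abs _ _
    _ ≤ ∑ i, (|(n i : ℝ)| + 1) * M := by
        refine Finset.sum_le_sum fun i _ => ?_
        rw [abs_mul]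
        have hw1 : |w i| ≤ |(n i : ℝ)| + 1 := by
          obtain ⟨h0, h1⟩ := hβ i
          calc |w i| ≤ |(n i : ℝ)| + |((b i : ℕ) : ℝ) / 2| := abs_add_le _ _
          _ ≤ |(n i : ℝ)| + 1 := by rw [_root_.abs_of_nonneg h0]; linarith
        have hz : |(z i).im| ≤ M := Finset.single_le_sum
          (f := fun j => |(z j).im|) (fun j _ => abs_nonneg _) (Finset.mem_univ i)
        exact mul_le_mul hw1 hz (abs_nonneg _) (by positivity)
    _ = M * ∑ i, |(n i : ℝ)| + M * g := by
        rw [← Finset.sum_mul, Finset.sum_add_distrib]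
        simp [Finset.card_univ]
        ring
  have hconst : ∑ _i : Fin g, (1/4 : ℝ) = (g : ℝ)/4 := by
    simp [Finset.card_univ]
    ring
  have hsq2 : (∑ i, ((n i : ℝ))^2)/2 - (g : ℝ)/4 ≤ ∑ i, (w i)^2 := by
    have h := hsq
    rw [Finset.sum_sub_distrib, ← Finset.sum_div, hconst] at h
    exact h
  have hRHS : ∑ i, (-(Real.pi * c) * ((n i : ℝ))^2 + (4 * Real.pi * M) * |(n i : ℝ)|)
      = -(Real.pi * c) * ∑ i, ((n i : ℝ))^2 + (4 * Real.pi * M) * ∑ i, |(n i : ℝ)| := by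
    rw [Finset.sum_add_distrib, ← Finset.mul_sum, ← Finset.mul_sum]
  rw [hRHS]
  have e1 := mul_le_mul_of_nonneg_left hquad' (show (0:ℝ) ≤ 2 * Real.pi by positivity)
  have e2 := mul_le_mul_of_nonneg_left hsq2
    (show (0:ℝ) ≤ 2 * Real.pi * c by positivity)
  have e3 := mul_le_mul_of_nonneg_left ((neg_le_abs _).trans habs)
    (show (0:ℝ) ≤ 4 * Real.pi by positivity)
  rw [hD]
  nlinarith [e1, e2, e3]
end

def thetaEquiv (g : ℕ) :
    ((Fin g → Fin 2) × ((Fin g → ℤ) × (Fin g → ℤ))) ≃ ((Fin g → ℤ) × (Fin g → ℤ)) where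
  toFun q := (fun i => q.2.1 i + q.2.2 i + ((q.1 i : ℕ) : ℤ), fun i => q.2.1 i - q.2.2 i)
  invFun p := (fun i => if (p.1 i + p.2 i) % 2 = 0 then 0 else 1,
    (fun i => (p.1 i + p.2 i - (p.1 i + p.2 i) % 2) / 2,
     fun i => (p.1 i - p.2 i - (p.1 i - p.2 i) % 2) / 2))
  left_inv := by
    rintro ⟨b, u, v⟩
    have hb : ∀ i, ((b i : ℕ) : ℤ) = 0 ∨ ((b i : ℕ) : ℤ) = 1 := fun i => by
      have := (b i).is_lt; omega
    dsimp only
    simp only [Prod.mk.injEq]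
    refine ⟨funext fun i => ?_, funext fun i => ?_, funext fun i => ?_⟩
    · rcases hb i with h | h
      · rw [if_pos (by omega)]
        have hv : (b i : ℕ) = 0 := by exact_mod_cast h
        exact (Fin.ext (by simpa using hv.symm))
      · rw [if_neg (by omega)]
        have hv : (b i : ℕ) = 1 := by exact_mod_cast h
        exact (Fin.ext (by simpa using hv.symm))
    · rcases hb i with h | h <;> omega
    · rcases hb i with h | h <;> omega
  right_inv := by
    rintro ⟨n, m⟩
    dsimp only
    simp only [Prod.mk.injEq]
    refine ⟨funext fun i => ?_, funext fun i => ?_⟩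
    · split_ifs with hc <;> simp <;> omega
    · omega
section
variable {g : ℕ} (τ : Matrix (Fin g) (Fin g) ℂ)
lemma term_identity (x y : Fin g → ℂ) (b : Fin g → Fin 2) (u v : Fin g → ℤ) :
    riemannThetaTerm τ (x + y) (fun i => u i + v i + ((b i : ℕ) : ℤ))
      * riemannThetaTerm τ (x - y) (fun i => u i - v i)
    = t2term τ b x u * t2term τ b y v := by
  rw [riemannThetaTerm, riemannThetaTerm, t2term, t2term, ← Complex.exp_add, ← Complex.exp_add]
  congr 1
  have hQ : (∑ i, ∑ j, ((u i + v i + ((b i : ℕ) : ℤ) : ℤ) : ℂ) * τ i j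
        * ((u j + v j + ((b j : ℕ) : ℤ) : ℤ) : ℂ))
      + (∑ i, ∑ j, ((u i - v i : ℤ) : ℂ) * τ i j * ((u j - v j : ℤ) : ℂ))
      = 2 * (∑ i, ∑ j, ((u i : ℂ) + ((b i : ℕ) : ℂ) / 2) * τ i j
          * ((u j : ℂ) + ((b j : ℕ) : ℂ) / 2))
      + 2 * (∑ i, ∑ j, ((v i : ℂ) + ((b i : ℕ) : ℂ) / 2) * τ i j
          * ((v j : ℂ) + ((b j : ℕ) : ℂ) / 2)) := by
    simp only [Finset.mul_sum, ← Finset.sum_add_distrib]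
    refine Finset.sum_congr rfl fun i _ => ?_
    refine Finset.sum_congr rfl fun j _ => ?_
    push_cast
    ring
  have hL : (∑ i, ((u i + v i + ((b i : ℕ) : ℤ) : ℤ) : ℂ) * (x + y) i)
      + (∑ i, ((u i - v i : ℤ) : ℂ) * (x - y) i)
      = 2 * (∑ i, ((u i : ℂ) + ((b i : ℕ) : ℂ) / 2) * x i)
      + 2 * (∑ i, ((v i : ℂ) + ((b i : ℕ) : ℂ) / 2) * y i) := by
    simp only [Finset.mul_sum, ← Finset.sum_add_distrib]
    refine Finset.sum_congr rfl fun i _ => ?_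
    push_cast [Pi.add_apply, Pi.sub_apply]
    ring
  push_cast at hQ hL ⊢
  linear_combination (Real.pi : ℂ) * Complex.I * hQ + 2 * (Real.pi : ℂ) * Complex.I * hL

end

section
variable {g : ℕ} (τ : Matrix (Fin g) (Fin g) ℂ)

lemma addition_formula (hg : 1 ≤ g)
    (hτ' : (Matrix.of fun i j => (τ i j).im).PosDef) (x y : Fin g → ℂ) :
    riemannTheta τ (x + y) * riemannTheta τ (x - y)
      = ∑ b : Fin g → Fin 2, theta2 τ b x * theta2 τ b y := by
  have S1 := summable_norm_rt τ hg hτ' (x + y)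
  have S2 := summable_norm_rt τ hg hτ' (x - y)
  have hpair : Summable fun p : (Fin g → ℤ) × (Fin g → ℤ) =>
      riemannThetaTerm τ (x + y) p.1 * riemannThetaTerm τ (x - y) p.2 :=
    (S1.mul_norm S2).of_norm
  have key : ∀ q : (Fin g → Fin 2) × ((Fin g → ℤ) × (Fin g → ℤ)),
      riemannThetaTerm τ (x + y) ((thetaEquiv g q).1)
        * riemannThetaTerm τ (x - y) ((thetaEquiv g q).2)
      = t2term τ q.1 x q.2.1 * t2term τ q.1 y q.2.2 := by
    rintro ⟨b, u, v⟩
    exact term_identity τ x y b u v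
  have hG : Summable fun q : (Fin g → Fin 2) × ((Fin g → ℤ) × (Fin g → ℤ)) =>
      t2term τ q.1 x q.2.1 * t2term τ q.1 y q.2.2 := by
    refine Summable.congr ?_ key
    exact (thetaEquiv g).summable_iff.mpr hpair
  calc riemannTheta τ (x + y) * riemannTheta τ (x - y)
      = ∑' p : (Fin g → ℤ) × (Fin g → ℤ),
          riemannThetaTerm τ (x + y) p.1 * riemannThetaTerm τ (x - y) p.2 :=
        tsum_mul_tsum_of_summable_norm S1 S2
    _ = ∑' q : (Fin g → Fin 2) × ((Fin g → ℤ) × (Fin g → ℤ)),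
          riemannThetaTerm τ (x + y) ((thetaEquiv g q).1)
            * riemannThetaTerm τ (x - y) ((thetaEquiv g q).2) :=
        (Equiv.tsum_eq (thetaEquiv g) (fun p =>
          riemannThetaTerm τ (x + y) p.1 * riemannThetaTerm τ (x - y) p.2)).symm
    _ = ∑' q : (Fin g → Fin 2) × ((Fin g → ℤ) × (Fin g → ℤ)),
          t2term τ q.1 x q.2.1 * t2term τ q.1 y q.2.2 := tsum_congr key
    _ = ∑' (b : Fin g → Fin 2), ∑' (p : (Fin g → ℤ) × (Fin g → ℤ)),
          t2term τ b x p.1 * t2term τ b y p.2 :=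
        Summable.tsum_prod' hG (fun b =>
          ((summable_norm_t2 τ hg hτ' b x).mul_norm (summable_norm_t2 τ hg hτ' b y)).of_norm)
    _ = ∑ b : Fin g → Fin 2, theta2 τ b x * theta2 τ b y := by
        rw [tsum_fintype]
        refine Finset.sum_congr rfl fun b _ => ?_
        rw [theta2_eq_tsum, theta2_eq_tsum,
          tsum_mul_tsum_of_summable_norm (summable_norm_t2 τ hg hτ' b x)
            (summable_norm_t2 τ hg hτ' b y)]

end


/-- if the points `K(ζ + a_i)` of the Kummer map satisfy the linear
relation `∑ α_i Θ_b(ζ + a_i) = 0` for every `b ∈ {0,1}^g`, then for every `z ∈ ℂ^g`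
one has `∑ α_i θ(z + 2ζ + a_i)·θ(z − a_i) = 0`. -/
theorem theta_relation_of_kummer_relation (g : ℕ) (hg : 1 ≤ g)
    (τ : Matrix (Fin g) (Fin g) ℂ) (hτ : τ.IsSymm)
    (hτ' : (Matrix.of fun i j => (τ i j).im).PosDef)
    (m : ℕ) (a : Fin (m + 2) → Fin g → ℂ) (ζ : Fin g → ℂ) (α : Fin (m + 2) → ℂ)
    (h : ∀ b : Fin g → Fin 2, ∑ i : Fin (m + 2), α i * theta2 τ b (ζ + a i) = 0) :
    ∀ z : Fin g → ℂ,
      ∑ i : Fin (m + 2),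
        α i * riemannTheta τ (z + 2 • ζ + a i) * riemannTheta τ (z - a i) = 0 := by
  intro z
  have key : ∀ i, riemannTheta τ (z + 2 • ζ + a i) * riemannTheta τ (z - a i)
      = ∑ b : Fin g → Fin 2, theta2 τ b (z + ζ) * theta2 τ b (ζ + a i) := by
    intro i
    have hxy : z + 2 • ζ + a i = (z + ζ) + (ζ + a i) := by
      funext j; simp [two_smul]; ring
    have hxy2 : z - a i = (z + ζ) - (ζ + a i) := by
      funext j; simp; ring
    rw [hxy, hxy2, addition_formula τ hg hτ']
  calc ∑ i, α i * riemannTheta τ (z + 2 • ζ + a i) * riemannTheta τ (z - a i)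
      = ∑ i, α i * ∑ b : Fin g → Fin 2, theta2 τ b (z + ζ) * theta2 τ b (ζ + a i) := by
        refine Finset.sum_congr rfl fun i _ => ?_
        rw [mul_assoc, key i]
    _ = ∑ b : Fin g → Fin 2, theta2 τ b (z + ζ) * ∑ i, α i * theta2 τ b (ζ + a i) := by
        simp only [Finset.mul_sum]
        rw [Finset.sum_comm]
        refine Finset.sum_congr rfl fun b _ => ?_
        refine Finset.sum_congr rfl fun i _ => ?_
        ring
    _ = 0 := by simp [h]
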